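/- arXiv:1412.0188 — 2 statements merged into one kernel-verified Lean document; each statement's English description precedes it below -/
import Mathlib

section
/- Let A be a finite-dimensional algebra over a field, u : X → Y a left minimal almost split morphism in mod A, Z a finitely generated A-module, and v ∈ rad^{n+1}(X, Z) for some n ≥ 0. Then there exists w ∈ rad^n(Y, Z) such that v = w ∘ u. -/
open CategoryTheory

universe v u

/-- A finitely generated module object is indecomposable: nontrivial and
its only idempotent endomorphisms are `0` and the identity. -/
def IsIndecO (A : Type u) [Ring A] (M : ModuleCat.{v} A) : Prop :=
  Nontrivial M ∧ ∀ e : M ⟶ M, e ≫ e = e → e = 0 ∨ e = 𝟙 M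

/-- `f` lies in the radical of the category of finitely generated modules. -/
def IsRad (A : Type u) [Ring A] {M N : ModuleCat.{v} A} (f : M ⟶ N) : Prop :=
  ∀ X : ModuleCat.{v} A, Module.Finite A X → IsIndecO A X →
    ∀ (u : X ⟶ M) (v : N ⟶ X), ¬ IsIso (u ≫ f ≫ v)

/-- `IsRadPow A n f` : `f` lies in the `n`-th power of the radical. -/
def IsRadPow (A : Type u) [Ring A] : ∀ (_ : ℕ) {M N : ModuleCat.{v} A}, (M ⟶ N) → Prop
  | 0, _, _, _ => True
  | (n+1), M, N, f => ∃ (m : ℕ) (Z : Fin m → ModuleCat.{v} A)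
      (h : ∀ i, M ⟶ Z i) (g : ∀ i, Z i ⟶ N),
      (∀ i, IsRad A (h i)) ∧ (∀ i, IsRadPow A n (g i)) ∧ f = ∑ i, h i ≫ g i
/-- `u : X ⟶ Y` is left minimal almost split: it is not a split monomorphism,
every morphism out of `X` which is not a split monomorphism factors through `u`,
and `u` is left minimal. -/
def IsLeftMinimalAlmostSplit (A : Type u) [Ring A] {X Y : ModuleCat.{v} A}
    (u : X ⟶ Y) : Prop :=
  (¬ ∃ r : Y ⟶ X, u ≫ r = 𝟙 X) ∧
  (∀ (Z : ModuleCat.{v} A) (f : X ⟶ Z), (¬ ∃ r : Z ⟶ X, f ≫ r = 𝟙 X) →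
      ∃ g : Y ⟶ Z, u ≫ g = f) ∧
  (∀ h : Y ⟶ Y, u ≫ h = u → IsIso h)


section Aux
variable {A : Type u} [Ring A]

theorem isRad_precomp {M N P : ModuleCat.{v} A} (a : P ⟶ M) {f : M ⟶ N}
    (hf : IsRad A f) : IsRad A (a ≫ f) := by
  intro X hX hind u' v' hiso
  exact hf X hX hind (u' ≫ a) v' (by simpa using hiso)

theorem isRadPow_precomp (n : ℕ) {M N P : ModuleCat.{v} A} (a : P ⟶ M) {f : M ⟶ N}
    (hf : IsRadPow A n f) : IsRadPow A n (a ≫ f) := by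
  cases n with
  | zero => trivial
  | succ n =>
    obtain ⟨m, Z, h, g, hr, hp, hsum⟩ := hf
    exact ⟨m, Z, fun i => a ≫ h i, g, fun i => isRad_precomp a (hr i), hp, by
      simp [hsum, Preadditive.comp_sum]⟩

theorem isRadPow_zero_mem (n : ℕ) {M N : ModuleCat.{v} A} :
    IsRadPow A n (0 : M ⟶ N) := by
  cases n with
  | zero => trivial
  | succ n =>
    exact ⟨0, Fin.elim0, fun i => i.elim0, fun i => i.elim0, fun i => i.elim0,
      fun i => i.elim0, by simp⟩

theorem isRadPow_add (n : ℕ) {M N : ModuleCat.{v} A} {f f' : M ⟶ N}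
    (hf : IsRadPow A n f) (hf' : IsRadPow A n f') : IsRadPow A n (f + f') := by
  cases n with
  | zero => trivial
  | succ n =>
    obtain ⟨m1, Z1, h1, g1, hr1, hp1, hs1⟩ := hf
    obtain ⟨m2, Z2, h2, g2, hr2, hp2, hs2⟩ := hf'
    let e := (finSumFinEquiv : Fin m1 ⊕ Fin m2 ≃ Fin (m1 + m2)).symm
    let Zs : Fin m1 ⊕ Fin m2 → ModuleCat.{v} A := Sum.elim Z1 Z2
    let H : ∀ s, M ⟶ Zs s := fun s => match s with
      | .inl j => h1 j
      | .inr j => h2 j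
    let G : ∀ s, Zs s ⟶ N := fun s => match s with
      | .inl j => g1 j
      | .inr j => g2 j
    refine ⟨m1 + m2, fun i => Zs (e i), fun i => H (e i), fun i => G (e i), ?_, ?_, ?_⟩
    · intro i; show IsRad A (H (e i)); rcases e i with j | j
      · exact hr1 j
      · exact hr2 j
    · intro i; show IsRadPow A n (G (e i)); rcases e i with j | j
      · exact hp1 j
      · exact hp2 j
    · have : ∑ i : Fin (m1 + m2), H (e i) ≫ G (e i) = ∑ s, H s ≫ G s :=
        Fintype.sum_equiv e _ _ (fun i => rfl)
      rw [this, Fintype.sum_sum_type, hs1, hs2]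
      rfl

theorem isRadPow_sum (n : ℕ) {M N : ModuleCat.{v} A} {ι : Type*} (s : Finset ι)
    (f : ι → (M ⟶ N)) (h : ∀ i ∈ s, IsRadPow A n (f i)) :
    IsRadPow A n (∑ i ∈ s, f i) :=
  Finset.sum_induction f _ (fun _ _ => isRadPow_add n) (isRadPow_zero_mem n) h

end Aux

section Indec
variable (k : Type u) [Field k] (A : Type u) [Ring A] [Algebra k A] [FiniteDimensional k A]

theorem exists_indec :
    ∀ (d : ℕ) (M : ModuleCat.{v} A), Module.Finite A M → Nontrivial M →
      ∀ (mk : Module k M), IsScalarTower k A M → Module.finrank k M ≤ d →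
    ∃ (W : ModuleCat.{v} A) (ι : W ⟶ M) (π : M ⟶ W),
      Module.Finite A W ∧ IsIndecO A W ∧ ι ≫ π = 𝟙 W := by
  intro d
  induction d with
  | zero =>
    intro M hfin hnt mk hst hd
    haveI : IsScalarTower k A M := hst
    haveI : Module.Finite k M := Module.Finite.trans A M
    have : 0 < Module.finrank k M := Module.finrank_pos
    omega
  | succ d ih =>
    intro M hfin hnt mk hst hd
    haveI : IsScalarTower k A M := hst
    haveI : Module.Finite k M := Module.Finite.trans A M
    by_cases hind : ∀ e : M ⟶ M, e ≫ e = e → e = 0 ∨ e = 𝟙 M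
    · exact ⟨M, 𝟙 M, 𝟙 M, hfin, ⟨hnt, hind⟩, Category.id_comp _⟩
    · push_neg at hind
      obtain ⟨e, hee, he0, he1⟩ := hind
      set p : Submodule A M := LinearMap.range e.hom with hp
      have hmem : ∀ x : M, e x ∈ p := fun x => LinearMap.mem_range_self e.hom x
      have heidem : ∀ x : M, e (e x) = e x := fun x => congrArg (fun f : M ⟶ M => f x) hee
      set W : ModuleCat.{v} A := ModuleCat.of A p with hW
      have hWnt : Nontrivial W := by
        obtain ⟨x, hx⟩ : ∃ x : M, e x ≠ 0 := by
          by_contra h; push_neg at h; exact he0 (ModuleCat.hom_ext (LinearMap.ext h))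
        exact ⟨⟨e x, hmem x⟩, 0, fun h => hx (congrArg Subtype.val h)⟩
      have hptop : p < ⊤ := by
        rcases lt_or_eq_of_le (le_top : p ≤ ⊤) with h | h
        · exact h
        · exfalso; apply he1
          apply ModuleCat.hom_ext; apply LinearMap.ext; intro x
          obtain ⟨y, hy⟩ : x ∈ p := h ▸ Submodule.mem_top
          show e x = x
          rw [← hy, heidem]
      letI mk' : Module k W := (p.restrictScalars k).module'
      haveI hst' : IsScalarTower k A W :=
        ⟨fun x a m => Subtype.ext (smul_assoc x a (Subtype.val m))⟩
      haveI : FiniteDimensional k (p.restrictScalars k) := inferInstance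
      haveI hWfk : Module.Finite k W := ‹FiniteDimensional k (p.restrictScalars k)›
      haveI hWfin : Module.Finite A W := @Module.Finite.of_restrictScalars_finite k A W _ _ _ _ _ _ hst' hWfk
      have hlt : Module.finrank k W < Module.finrank k M := by
        have : p.restrictScalars k < ⊤ := by
          rcases lt_or_eq_of_le (le_top : p.restrictScalars k ≤ ⊤) with h | h
          · exact h
          · exfalso
            exact (lt_top_iff_ne_top.mp hptop)
              ((Submodule.restrictScalars_eq_top_iff _ _ _).mp h)
        exact Submodule.finrank_lt this.ne
      obtain ⟨W', ι', π', h1, h2, h3⟩ := ih W hWfin hWnt mk' hst' (by omega)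
      refine ⟨W', ι' ≫ ModuleCat.ofHom p.subtype,
        ModuleCat.ofHom (e.hom.codRestrict p hmem) ≫ π', h1, h2, ?_⟩
      have key : (ModuleCat.ofHom p.subtype : W ⟶ M) ≫
          ModuleCat.ofHom (e.hom.codRestrict p hmem) = 𝟙 W := by
        apply ModuleCat.hom_ext; apply LinearMap.ext; rintro ⟨x, y, rfl⟩
        exact Subtype.ext (heidem y)
      rw [Category.assoc, ← Category.assoc (ModuleCat.ofHom p.subtype), key,
        Category.id_comp, h3]

end Indec

theorem isRad_not_split (k : Type u) [Field k] (A : Type u) [Ring A] [Algebra k A]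
    [FiniteDimensional k A] {M N : ModuleCat.{v} A} (hM : Module.Finite A M)
    (hMnt : Nontrivial M) {f : M ⟶ N} (hf : IsRad A f) :
    ¬ ∃ r : N ⟶ M, f ≫ r = 𝟙 M := by
  rintro ⟨r, hr⟩
  letI mk : Module k M := Module.compHom M (algebraMap k A)
  haveI hst : IsScalarTower k A M := ⟨fun x a m => by
    show (x • a) • m = algebraMap k A x • (a • m)
    rw [Algebra.smul_def, mul_smul]⟩
  obtain ⟨W, ι, π, hWf, hWind, hιπ⟩ :=
    exists_indec k A (Module.finrank k M) M hM hMnt mk hst le_rfl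
  apply hf W hWf hWind ι (r ≫ π)
  have : ι ≫ f ≫ r ≫ π = 𝟙 W := by
    rw [← Category.assoc f, hr, Category.id_comp, hιπ]
  rw [this]
  infer_instance

/-- Any morphism in `rad^{n+1}` out of the source of a left minimal almost split
morphism factors through it with a factor in `rad^n`. -/
theorem stmt4 (k : Type u) [Field k] (A : Type u) [Ring A] [Algebra k A]
    [FiniteDimensional k A]
    (X Y Z : ModuleCat.{v} A)
    (hX : Module.Finite A X) (hY : Module.Finite A Y) (hZ : Module.Finite A Z)
    (u : X ⟶ Y) (hu : IsLeftMinimalAlmostSplit A u)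
    (n : ℕ) (v : X ⟶ Z) (hv : IsRadPow A (n + 1) v) :
    ∃ w : Y ⟶ Z, IsRadPow A n w ∧ v = u ≫ w := by
  have hXnt : Nontrivial X := by
    by_contra h
    rw [not_nontrivial_iff_subsingleton] at h
    exact hu.1 ⟨0, ModuleCat.hom_ext (LinearMap.ext fun x => Subsingleton.elim _ _)⟩
  obtain ⟨m, Zs, h, g, hr, hp, hsum⟩ := hv
  have hfac : ∀ i, ∃ g' : Y ⟶ Zs i, u ≫ g' = h i := fun i =>
    hu.2.1 (Zs i) (h i) (isRad_not_split k A hX hXnt (hr i))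
  choose g' hg' using hfac
  refine ⟨∑ i, g' i ≫ g i, isRadPow_sum n _ _ (fun i _ => isRadPow_precomp n (g' i) (hp i)), ?_⟩
  rw [hsum, Preadditive.comp_sum]
  exact Finset.sum_congr rfl fun i _ => by rw [← Category.assoc, hg']
end

section
/- Let A be a finite-dimensional algebra over a field and X₁, …, X_{n+1} indecomposable finitely generated A-modules. Suppose there are morphisms f_i, ε_i : X_i → X_{i+1} for 1 ≤ i ≤ n such that each f_i is irreducible, for each i either ε_i = f_i or ε_i ∈ rad², the composite f_n ∘ ⋯ ∘ f_1 = 0, and the composite ε_n ∘ ⋯ ∘ ε_1 ≠ 0. Then ε_n ∘ ⋯ ∘ ε_1 ∈ rad^{n+1} \ {0}, i.e. there exists a nonzero composite of morphisms along the sequence lying in rad^{n+1}. -/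
open CategoryTheory

universe v u

/-- Composite of the first `n` morphisms along a chain
`X 0 ⟶ X 1 ⟶ X 2 ⟶ ⋯`. -/
def chainComp {A : Type u} [Ring A] (X : ℕ → ModuleCat.{v} A)
    (f : ∀ i, X i ⟶ X (i + 1)) : ∀ n, X 0 ⟶ X n
  | 0 => 𝟙 (X 0)
  | (n+1) => chainComp X f n ≫ f n

section Aux

variable {A : Type u} [Ring A]

lemma isRad_comp_left {M N P : ModuleCat.{v} A} (f : M ⟶ N) {g : N ⟶ P}
    (hg : IsRad A g) : IsRad A (f ≫ g) := by
  intro X h1 h2 u v hiso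
  exact hg X h1 h2 (u ≫ f) v (by simpa [Category.assoc] using hiso)

lemma isRad_comp_right {M N P : ModuleCat.{v} A} {f : M ⟶ N} (hf : IsRad A f)
    (g : N ⟶ P) : IsRad A (f ≫ g) := by
  intro X h1 h2 u v hiso
  exact hf X h1 h2 u (g ≫ v) (by simpa [Category.assoc] using hiso)

lemma isRadPow_one_of_isRad {M N : ModuleCat.{v} A} {f : M ⟶ N}
    (hf : IsRad A f) : IsRadPow A 1 f := by
  refine ⟨1, fun _ => N, fun _ => f, fun _ => 𝟙 N, fun _ => hf, fun _ => trivial, ?_⟩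
  simp

lemma isRadPow_comp_left : ∀ (b : ℕ) {M N P : ModuleCat.{v} A}
    (f : M ⟶ N) {g : N ⟶ P}, IsRadPow A b g → IsRadPow A b (f ≫ g) := by
  intro b
  induction b with
  | zero => intro _ _ _ _ _ _; trivial
  | succ b _ =>
    rintro M N P f g ⟨m, Z, h, gg, hh, hg, rfl⟩
    refine ⟨m, Z, fun i => f ≫ h i, gg, fun i => isRad_comp_left f (hh i), hg, ?_⟩
    simp [Preadditive.comp_sum, Category.assoc]

lemma isRadPow_comp : ∀ (a : ℕ) {M N P : ModuleCat.{v} A}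
    (f : M ⟶ N) (g : N ⟶ P) (b : ℕ), IsRadPow A a f → IsRadPow A b g →
    IsRadPow A (a + b) (f ≫ g) := by
  intro a
  induction a with
  | zero => intro M N P f g b _ hg; simpa using isRadPow_comp_left b f hg
  | succ a ih =>
    rintro M N P f g b ⟨m, Z, h, gg, hh, hg, rfl⟩ hgb
    have : a + 1 + b = (a + b) + 1 := by omega
    rw [this]
    refine ⟨m, Z, h, fun i => gg i ≫ g, hh, fun i => ih (gg i) g b (hg i) hgb, ?_⟩
    simp [Preadditive.sum_comp, Category.assoc]

lemma isRadPow_of_succ : ∀ (m : ℕ) {M N : ModuleCat.{v} A} {f : M ⟶ N},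
    IsRadPow A (m + 1) f → IsRadPow A m f := by
  intro m
  induction m with
  | zero => intro _ _ _ _; trivial
  | succ m ih =>
    rintro M N f ⟨l, Z, h, g, hh, hg, rfl⟩
    exact ⟨l, Z, h, g, hh, fun i => ih (hg i), rfl⟩

lemma chainComp_congr (X : ℕ → ModuleCat.{v} A) (f ε : ∀ i, X i ⟶ X (i + 1)) :
    ∀ n, (∀ i < n, ε i = f i) → chainComp X ε n = chainComp X f n := by
  intro n
  induction n with
  | zero => intro _; rfl
  | succ n ih =>
    intro h
    show chainComp X ε n ≫ ε n = chainComp X f n ≫ f n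
    rw [ih (fun i hi => h i (by omega)), h n (by omega)]

lemma chainComp_pow (X : ℕ → ModuleCat.{v} A) (ε : ∀ i, X i ⟶ X (i + 1))
    (w : ℕ → ℕ) : ∀ n, (∀ i < n, IsRadPow A (w i) (ε i)) →
    IsRadPow A (∑ i ∈ Finset.range n, w i) (chainComp X ε n) := by
  intro n
  induction n with
  | zero => intro _; trivial
  | succ n ih =>
    intro h
    rw [Finset.sum_range_succ]
    exact isRadPow_comp _ _ _ _ (ih fun i hi => h i (by omega)) (h n (by omega))

end Aux

/-- If `f i : X i ⟶ X (i+1)` are irreducible morphisms between indecomposables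
with `f_n ∘ ⋯ ∘ f_1 = 0`, and `ε i` agrees with `f i` or lies in `rad²`, and the
composite of the `ε i` is nonzero, then this composite lies in
`rad^{n+1} \ {0}`. -/
theorem stmt14 (k : Type u) [Field k] (A : Type u) [Ring A] [Algebra k A]
    [FiniteDimensional k A]
    (n : ℕ) (hn : 1 ≤ n)
    (X : ℕ → ModuleCat.{v} A)
    (hfg : ∀ i ≤ n, Module.Finite A (X i))
    (hind : ∀ i ≤ n, IsIndecO A (X i))
    (f ε : ∀ i, X i ⟶ X (i + 1))
    (hirr : ∀ i < n, IsRad A (f i) ∧ ¬ IsRadPow A 2 (f i))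
    (hε : ∀ i < n, ε i = f i ∨ IsRadPow A 2 (ε i))
    (hf0 : chainComp X f n = 0)
    (hε0 : chainComp X ε n ≠ 0) :
    IsRadPow A (n + 1) (chainComp X ε n) ∧ chainComp X ε n ≠ 0 := by
  by_cases hall : ∀ i < n, ε i = f i
  · exact absurd (chainComp_congr X f ε n hall ▸ hf0) hε0
  · push_neg at hall
    obtain ⟨j, hjn, hjne⟩ := hall
    have hj2 : IsRadPow A 2 (ε j) := (hε j hjn).resolve_left hjne
    set w : ℕ → ℕ := fun i => if i = j then 2 else 1 with hw
    have hweights : ∀ i < n, IsRadPow A (w i) (ε i) := by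
      intro i hi
      by_cases hij : i = j
      · subst hij; simpa [hw] using hj2
      · simp only [hw, if_neg hij]
        rcases hε i hi with h | h
        · exact h ▸ isRadPow_one_of_isRad (hirr i hi).1
        · exact isRadPow_of_succ 1 h
    have hsum : ∑ i ∈ Finset.range n, w i = n + 1 := by
      calc ∑ i ∈ Finset.range n, w i
          = ∑ i ∈ Finset.range n, ((if i = j then 1 else 0) + 1) := by
            apply Finset.sum_congr rfl; intro i _
            simp only [hw]; split <;> rfl
        _ = (∑ i ∈ Finset.range n, if i = j then (1:ℕ) else 0)
              + ∑ _i ∈ Finset.range n, 1 := Finset.sum_add_distrib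
        _ = 1 + n := by
            rw [Finset.sum_ite_eq' (Finset.range n) j (fun _ => (1:ℕ))]
            simp [Finset.mem_range.mpr hjn]
        _ = n + 1 := by omega
    exact ⟨hsum ▸ chainComp_pow X ε w n hweights, hε0⟩
end
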